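/- Let Σ̂ be a real p×p positive definite matrix and ε ≥ 0. Then the Kullback-Leibler uncertainty set { Σ positive definite : (1/2)(Tr(Σ̂⁻¹Σ) − p + log det(Σ̂ Σ⁻¹)) ≤ ε } is a convex and compact subset of the real p×p symmetric matrices. -/

import Mathlib

open Matrix Set
open scoped BigOperators Classical

set_option maxHeartbeats 1000000

noncomputable section

abbrev Mat (p : ℕ) := Matrix (Fin p) (Fin p) ℝ

/-! ### Auxiliary lemmas -/

section SqrtPort
open scoped MatrixOrder

def Matrix.PosSemidef.sqrt {p : ℕ} {S : Mat p} (_h : S.PosSemidef) : Mat p := CFC.sqrt S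

lemma Matrix.PosSemidef.posSemidef_sqrt {p : ℕ} {S : Mat p} (h : S.PosSemidef) :
    h.sqrt.PosSemidef := (CFC.sqrt_nonneg S).posSemidef

lemma Matrix.PosSemidef.sqrt_mul_self {p : ℕ} {S : Mat p} (h : S.PosSemidef) :
    h.sqrt * h.sqrt = S := CFC.sqrt_mul_sqrt_self S h.nonneg

end SqrtPort

lemma trace_eq_sum_eig {p : ℕ} {M : Mat p} (hM : M.IsHermitian) :
    M.trace = ∑ i, hM.eigenvalues i := by
  conv_lhs => rw [hM.spectral_theorem]
  rw [Unitary.conjStarAlgAut_apply, trace_mul_cycle, Unitary.coe_star_mul_self, one_mul, trace_diagonal]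
  simp [RCLike.ofReal]

lemma aI_add_bM_eq {p : ℕ} {M : Mat p} (hM : M.IsHermitian) (a b : ℝ) :
    a • (1 : Mat p) + b • M =
      (hM.eigenvectorUnitary : Mat p) * (Matrix.diagonal (fun i => a + b * hM.eigenvalues i)) *
        (star hM.eigenvectorUnitary : Mat p) := by
  have hU : (hM.eigenvectorUnitary : Mat p) * (star hM.eigenvectorUnitary : Mat p) = 1 :=
    Unitary.coe_mul_star_self _
  conv_lhs => rw [hM.spectral_theorem, Unitary.conjStarAlgAut_apply]
  have : (Matrix.diagonal (fun i => a + b * hM.eigenvalues i) : Mat p)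
      = a • 1 + b • Matrix.diagonal (RCLike.ofReal ∘ hM.eigenvalues) := by
    ext i j
    by_cases h : i = j <;> simp [Matrix.diagonal, h, RCLike.ofReal, Matrix.one_apply]
  rw [this]
  simp [mul_add, add_mul, Matrix.mul_smul, Matrix.smul_mul, hU, mul_assoc]

lemma det_aI_add_bM {p : ℕ} {M : Mat p} (hM : M.IsHermitian) (a b : ℝ) :
    (a • (1 : Mat p) + b • M).det = ∏ i, (a + b * hM.eigenvalues i) := by
  have hU : (hM.eigenvectorUnitary : Mat p) * (star hM.eigenvectorUnitary : Mat p) = 1 :=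
    Unitary.coe_mul_star_self _
  rw [aI_add_bM_eq hM a b, det_mul, det_mul, det_diagonal]
  have h2 : det ((hM.eigenvectorUnitary : Mat p)) * det ((star hM.eigenvectorUnitary : Mat p))
      = 1 := by rw [← det_mul, hU, det_one]
  calc ((hM.eigenvectorUnitary : Mat p).det * ∏ i, (a + b * hM.eigenvalues i)) *
        (star hM.eigenvectorUnitary : Mat p).det
      = ((hM.eigenvectorUnitary : Mat p).det * (star hM.eigenvectorUnitary : Mat p).det) *
        ∏ i, (a + b * hM.eigenvalues i) := by ring
    _ = ∏ i, (a + b * hM.eigenvalues i) := by rw [h2, one_mul]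

lemma posDef_of_posSemidef_det_ne_zero {p : ℕ} {A : Mat p} (hA : A.PosSemidef)
    (hdet : A.det ≠ 0) : A.PosDef := by
  refine PosDef.of_dotProduct_mulVec_pos hA.1 (fun x hx => ?_)
  rcases lt_or_eq_of_le (hA.dotProduct_mulVec_nonneg x) with h | h
  · exact h
  · exfalso
    have h0 : A *ᵥ x = 0 := (hA.dotProduct_mulVec_zero_iff x).mp h.symm
    have : x = 0 := by
      have := congrArg (fun v => A⁻¹ *ᵥ v) h0
      simpa [mulVec_mulVec, nonsing_inv_mul A (isUnit_iff_ne_zero.2 hdet), mulVec_zero] using this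
    exact hx this

lemma sqrt_posDef {p : ℕ} {S : Mat p} (hS : S.PosDef) : hS.posSemidef.sqrt.PosDef := by
  apply posDef_of_posSemidef_det_ne_zero hS.posSemidef.posSemidef_sqrt
  intro h
  have h2 : hS.posSemidef.sqrt * hS.posSemidef.sqrt = S := hS.posSemidef.sqrt_mul_self
  have hd : S.det = 0 := by rw [← h2, det_mul, h, mul_zero]
  exact hS.det_pos.ne' hd

lemma posDef_smul {p : ℕ} {S : Mat p} (hS : S.PosDef) {a : ℝ} (ha : 0 < a) :
    (a • S).PosDef := by
  refine PosDef.of_dotProduct_mulVec_pos ?_ (fun x hx => ?_)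
  · have : (a • S)ᴴ = a • Sᴴ := by ext i j; simp [conjTranspose_apply]
    rw [IsHermitian, this, hS.1.eq]
  · rw [smul_mulVec, dotProduct_smul, smul_eq_mul]
    exact mul_pos ha (hS.dotProduct_mulVec_pos hx)

lemma psd_diag_nonneg {p : ℕ} {P : Mat p} (hP : P.PosSemidef) (i : Fin p) : 0 ≤ P i i := by
  have := hP.dotProduct_mulVec_nonneg (Pi.single i 1)
  simpa [dotProduct_single, mulVec_single] using this

lemma psd_entry_le {p : ℕ} {P : Mat p} (hP : P.PosSemidef) (i j : Fin p) :
    |P i j| ≤ (P i i + P j j) / 2 := by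
  have hsym : P j i = P i j := by
    have := congrFun (congrFun hP.1 i) j
    simpa [conjTranspose_apply] using this
  have h1 := hP.dotProduct_mulVec_nonneg (Pi.single i 1 + Pi.single j 1)
  have h2 := hP.dotProduct_mulVec_nonneg (Pi.single i 1 - Pi.single j 1)
  have e1 : star (Pi.single i (1:ℝ) + Pi.single j 1) ⬝ᵥ
      (P *ᵥ (Pi.single i 1 + Pi.single j 1)) = P i i + P i j + P j i + P j j := by
    simp [mulVec_add, dotProduct_add, add_dotProduct, dotProduct_single, single_dotProduct,
      mulVec_single]
    ring
  have e2 : star (Pi.single i (1:ℝ) - Pi.single j 1) ⬝ᵥ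
      (P *ᵥ (Pi.single i 1 - Pi.single j 1)) = P i i - P i j - P j i + P j j := by
    simp [mulVec_sub, dotProduct_sub, sub_dotProduct, dotProduct_single, single_dotProduct,
      mulVec_single]
    ring
  rw [e1] at h1; rw [e2] at h2
  rw [abs_le]
  constructor <;> [linarith [hsym]; linarith [hsym]]

lemma loewner_le {p : ℕ} {M : Mat p} (hM : M.IsHermitian) {b : ℝ}
    (hb : ∀ i, hM.eigenvalues i ≤ b) : (b • (1 : Mat p) - M).PosSemidef := by
  have h : b • (1 : Mat p) - M = b • (1 : Mat p) + (-1 : ℝ) • M := by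
    rw [neg_one_smul, sub_eq_add_neg]
  rw [h, aI_add_bM_eq hM b (-1)]
  have hdiag : (Matrix.diagonal (fun i => b + (-1) * hM.eigenvalues i) : Mat p).PosSemidef :=
    Matrix.PosSemidef.diagonal (fun i => by have := hb i; simp; linarith)
  have := hdiag.mul_mul_conjTranspose_same (hM.eigenvectorUnitary : Mat p)
  rwa [← star_eq_conjTranspose] at this

lemma isClosed_psd {p : ℕ} : IsClosed {S : Mat p | S.PosSemidef} := by
  have heq : {S : Mat p | S.PosSemidef} =
      {S : Mat p | Sᴴ = S} ∩ ⋂ x : Fin p → ℝ, {S : Mat p | 0 ≤ star x ⬝ᵥ (S *ᵥ x)} := by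
    ext S
    simp only [mem_setOf_eq, mem_inter_iff, mem_iInter]
    exact posSemidef_iff_dotProduct_mulVec
  rw [heq]
  refine IsClosed.inter ?_ (isClosed_iInter fun x => ?_)
  · exact isClosed_eq (continuous_id.matrix_conjTranspose) continuous_id
  · exact isClosed_le continuous_const
      (continuous_const.dotProduct (continuous_id.matrix_mulVec continuous_const))

lemma eig_upper {p : ℕ} {M : Mat p} (hM : M.PosDef) {c : ℝ}
    (h : M.trace - Real.log M.det ≤ c) (j : Fin p) :
    hM.1.eigenvalues j ≤ 2 * (c - p + 1) := by
  have hμ : ∀ i, 0 < hM.1.eigenvalues i := hM.eigenvalues_pos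
  have hdet : M.det = ∏ i, hM.1.eigenvalues i := by simpa using hM.1.det_eq_prod_eigenvalues
  have hlog : Real.log M.det = ∑ i, Real.log (hM.1.eigenvalues i) := by
    rw [hdet, Real.log_prod (fun i _ => (hμ i).ne')]
  have hsum : ∑ i, (hM.1.eigenvalues i - Real.log (hM.1.eigenvalues i)) ≤ c := by
    rw [Finset.sum_sub_distrib, ← trace_eq_sum_eig hM.1, ← hlog]; exact h
  have hone : ∀ i, 1 ≤ hM.1.eigenvalues i - Real.log (hM.1.eigenvalues i) := fun i => by
    have := Real.log_le_sub_one_of_pos (hμ i); linarith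
  have hp : 1 ≤ p := Nat.one_le_iff_ne_zero.2 (by rintro rfl; exact j.elim0)
  have hper : hM.1.eigenvalues j - Real.log (hM.1.eigenvalues j) ≤ c - p + 1 := by
    have hsplit : (hM.1.eigenvalues j - Real.log (hM.1.eigenvalues j)) +
        ∑ i ∈ Finset.univ.erase j, (hM.1.eigenvalues i - Real.log (hM.1.eigenvalues i))
        = ∑ i, (hM.1.eigenvalues i - Real.log (hM.1.eigenvalues i)) := by
      rw [add_comm]
      exact Finset.sum_erase_add _ _ (Finset.mem_univ j)
    have hcard : (Finset.univ.erase j).card = p - 1 := by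
      rw [Finset.card_erase_of_mem (Finset.mem_univ j)]; simp
    have hrest : ((p : ℝ) - 1) ≤
        ∑ i ∈ Finset.univ.erase j, (hM.1.eigenvalues i - Real.log (hM.1.eigenvalues i)) := by
      have := Finset.card_nsmul_le_sum (Finset.univ.erase j)
        (fun i => hM.1.eigenvalues i - Real.log (hM.1.eigenvalues i)) 1
        (fun i _ => hone i)
      rw [hcard] at this
      have hc : ((p - 1 : ℕ) : ℝ) = (p : ℝ) - 1 := by
        push_cast [Nat.cast_sub hp]; ring
      simpa [nsmul_eq_mul, hc] using this
    linarith [hsum, hsplit.symm ▸ (by linarith [hrest] :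
      (hM.1.eigenvalues j - Real.log (hM.1.eigenvalues j)) + ((p:ℝ) - 1) ≤
      ∑ i, (hM.1.eigenvalues i - Real.log (hM.1.eigenvalues i)))]
  set μ := hM.1.eigenvalues j
  have hlog2 : Real.log 2 ≤ 1 := by
    have := Real.log_le_sub_one_of_pos (by norm_num : (0:ℝ) < 2); linarith
  have hhalf : Real.log μ ≤ μ / 2 := by
    have h1 : Real.log (μ / 2) ≤ μ / 2 - 1 :=
      Real.log_le_sub_one_of_pos (div_pos (hμ j) two_pos)
    have h2 : Real.log (μ / 2) = Real.log μ - Real.log 2 :=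
      Real.log_div (hμ j).ne' (by norm_num)
    linarith
  linarith [hper, hhalf]

lemma logdet_concave {p : ℕ} {S T : Mat p} (hS : S.PosDef) (hT : T.PosDef) {a b : ℝ}
    (ha : 0 ≤ a) (hb : 0 ≤ b) (hab : a + b = 1) :
    a * Real.log S.det + b * Real.log T.det ≤ Real.log (a • S + b • T).det := by
  rcases eq_or_lt_of_le ha with rfl | ha'
  · have hb1 : b = 1 := by linarith
    simp [hb1]
  rcases eq_or_lt_of_le hb with rfl | hb'
  · have ha1 : a = 1 := by linarith
    simp [ha1]
  set R := hS.posSemidef.sqrt with hRdef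
  have hR : R.PosDef := sqrt_posDef hS
  have hRH : R.IsHermitian := hS.posSemidef.posSemidef_sqrt.1
  have hRR : R * R = S := hS.posSemidef.sqrt_mul_self
  have hRunit : IsUnit R.det := isUnit_iff_ne_zero.2 hR.det_pos.ne'
  have hRiH : (R⁻¹).IsHermitian := hR.inv.1
  set M := R⁻¹ * T * R⁻¹ with hMdef
  have hM : M.PosDef := by
    apply posDef_of_posSemidef_det_ne_zero
    · have := hT.posSemidef.mul_mul_conjTranspose_same (R⁻¹)
      rwa [hRiH.eq] at this
    · rw [hMdef, det_mul, det_mul, det_nonsing_inv, Ring.inverse_eq_inv]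
      exact ne_of_gt (mul_pos (mul_pos (inv_pos.2 hR.det_pos) hT.det_pos) (inv_pos.2 hR.det_pos))
  have key : a • S + b • T = R * (a • (1 : Mat p) + b • M) * R := by
    rw [hMdef]
    rw [Matrix.mul_add, Matrix.add_mul, Matrix.mul_smul, Matrix.mul_smul,
      Matrix.smul_mul, Matrix.smul_mul, Matrix.mul_one, hRR]
    congr 1
    rw [← Matrix.mul_assoc, ← Matrix.mul_assoc, Matrix.mul_nonsing_inv _ hRunit, Matrix.one_mul,
      Matrix.mul_assoc, Matrix.nonsing_inv_mul _ hRunit, Matrix.mul_one]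
  have hdet : (a • S + b • T).det = S.det * ∏ i, (a + b * hM.1.eigenvalues i) := by
    rw [key, det_mul, det_mul, det_aI_add_bM hM.1]
    rw [show R.det * (∏ i, (a + b * hM.1.eigenvalues i)) * R.det
        = (R.det * R.det) * ∏ i, (a + b * hM.1.eigenvalues i) by ring, ← det_mul, hRR]
  have heigpos : ∀ i, 0 < hM.1.eigenvalues i := hM.eigenvalues_pos
  have hterm : ∀ i, 0 < a + b * hM.1.eigenvalues i := fun i => by nlinarith [heigpos i]
  have hlogsum : Real.log (∏ i, (a + b * hM.1.eigenvalues i))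
      = ∑ i, Real.log (a + b * hM.1.eigenvalues i) :=
    Real.log_prod (fun i _ => (hterm i).ne')
  have hconc : ∀ i, b * Real.log (hM.1.eigenvalues i) ≤ Real.log (a + b * hM.1.eigenvalues i) := by
    intro i
    have := (strictConcaveOn_log_Ioi.concaveOn).2 (mem_Ioi.2 one_pos)
      (mem_Ioi.2 (heigpos i)) ha hb hab
    simpa [smul_eq_mul] using this
  have hdetM : M.det = ∏ i, hM.1.eigenvalues i := by
    have := hM.1.det_eq_prod_eigenvalues
    simpa using this
  have hlogM : Real.log M.det = ∑ i, Real.log (hM.1.eigenvalues i) := by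
    rw [hdetM, Real.log_prod (fun i _ => (heigpos i).ne')]
  have hMdet2 : M.det = T.det / S.det := by
    rw [hMdef, det_mul, det_mul, det_nonsing_inv, Ring.inverse_eq_inv, ← hRR, det_mul]
    field_simp
  have hlogM2 : Real.log M.det = Real.log T.det - Real.log S.det := by
    rw [hMdet2, Real.log_div hT.det_pos.ne' hS.det_pos.ne']
  have hsum : b * Real.log M.det ≤ ∑ i, Real.log (a + b * hM.1.eigenvalues i) := by
    rw [hlogM, Finset.mul_sum]
    exact Finset.sum_le_sum fun i _ => hconc i
  have hfinal : Real.log (a • S + b • T).det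
      = Real.log S.det + Real.log (∏ i, (a + b * hM.1.eigenvalues i)) := by
    rw [hdet, Real.log_mul hS.det_pos.ne' (Finset.prod_pos (fun i _ => hterm i)).ne']
  rw [hfinal, hlogsum]
  rw [hlogM2] at hsum
  have ha1 : a = 1 - b := by linarith
  calc a * Real.log S.det + b * Real.log T.det
      = Real.log S.det + b * (Real.log T.det - Real.log S.det) := by rw [ha1]; ring
    _ ≤ Real.log S.det + ∑ i, Real.log (a + b * hM.1.eigenvalues i) := by linarith [hsum]

lemma trace_inv_mul_nonneg {p : ℕ} {Sh S : Mat p} (hSh : Sh.PosDef) (hS : S.PosSemidef) :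
    0 ≤ (Sh⁻¹ * S).trace := by
  set R := hSh.posSemidef.sqrt with hRdef
  have hR : R.PosDef := sqrt_posDef hSh
  have hRR : R * R = Sh := hSh.posSemidef.sqrt_mul_self
  have hRiH : (R⁻¹).IsHermitian := hR.inv.1
  have hinv : Sh⁻¹ = R⁻¹ * R⁻¹ := by rw [← hRR, Matrix.mul_inv_rev]
  have hM : (R⁻¹ * S * R⁻¹).PosSemidef := by
    have := hS.mul_mul_conjTranspose_same (R⁻¹)
    rwa [hRiH.eq] at this
  have htr : (Sh⁻¹ * S).trace = (R⁻¹ * S * R⁻¹).trace := by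
    rw [hinv, Matrix.mul_assoc, trace_mul_comm]
  rw [htr, Matrix.trace]
  exact Finset.sum_nonneg fun i _ => psd_diag_nonneg hM i

lemma constraint_iff {p : ℕ} {Sh : Mat p} (hSh : Sh.PosDef) (ε : ℝ) {S : Mat p}
    (hS : S.PosDef) :
    ((1 : ℝ) / 2) * ((Sh⁻¹ * S).trace - (p : ℝ) + Real.log (Sh * S⁻¹).det) ≤ ε ↔
      (Sh⁻¹ * S).trace - Real.log S.det ≤ 2 * ε + p - Real.log Sh.det := by
  have h1 : (Sh * S⁻¹).det = Sh.det * (S.det)⁻¹ := by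
    rw [det_mul, det_nonsing_inv, Ring.inverse_eq_inv]
  have h2 : Real.log (Sh * S⁻¹).det = Real.log Sh.det - Real.log S.det := by
    rw [h1, Real.log_mul hSh.det_pos.ne' (inv_ne_zero hS.det_pos.ne'), Real.log_inv]
    ring
  rw [h2]
  constructor <;> intro h <;> linarith

/-- the Kullback-Leibler uncertainty set
`{Σ ≻ 0 : ½(Tr(Σ̂⁻¹Σ) − p + log det(Σ̂Σ⁻¹)) ≤ ε}` around a positive definite nominal
matrix `Σ̂` is convex and compact (in the space of real `p × p` matrices). -/
theorem stmt_19 {p : ℕ} (Sh : Mat p) (hSh : Sh.PosDef) (ε : ℝ) (hε : 0 ≤ ε) :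
    Convex ℝ {S : Mat p | S.PosDef ∧
        ((1 : ℝ) / 2) * ((Sh⁻¹ * S).trace - (p : ℝ) + Real.log (Sh * S⁻¹).det) ≤ ε} ∧
    IsCompact {S : Mat p | S.PosDef ∧
        ((1 : ℝ) / 2) * ((Sh⁻¹ * S).trace - (p : ℝ) + Real.log (Sh * S⁻¹).det) ≤ ε} := by
  set c : ℝ := 2 * ε + p - Real.log Sh.det with hc
  set g : Mat p → ℝ := fun S => (Sh⁻¹ * S).trace - Real.log S.det with hg
  have hKeq : {S : Mat p | S.PosDef ∧
      ((1 : ℝ) / 2) * ((Sh⁻¹ * S).trace - (p : ℝ) + Real.log (Sh * S⁻¹).det) ≤ ε}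
      = {S : Mat p | S.PosDef ∧ g S ≤ c} := by
    ext S
    simp only [mem_setOf_eq]
    exact and_congr_right fun hS => constraint_iff hSh ε hS
  rw [hKeq]
  constructor
  -- Convexity
  · intro x hx y hy a b ha hb hab
    obtain ⟨hx1, hx2⟩ := hx
    obtain ⟨hy1, hy2⟩ := hy
    rcases eq_or_lt_of_le ha with rfl | ha'
    · have hb1 : b = 1 := by linarith
      simpa [hb1] using ⟨hy1, hy2⟩
    rcases eq_or_lt_of_le hb with rfl | hb'
    · have ha1 : a = 1 := by linarith
      simpa [ha1] using ⟨hx1, hx2⟩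
    refine ⟨(posDef_smul hx1 ha').add (posDef_smul hy1 hb'), ?_⟩
    have htr : (Sh⁻¹ * (a • x + b • y)).trace
        = a * (Sh⁻¹ * x).trace + b * (Sh⁻¹ * y).trace := by
      rw [Matrix.mul_add, Matrix.mul_smul, Matrix.mul_smul, trace_add, trace_smul, trace_smul]
      simp [smul_eq_mul]
    have hld := logdet_concave hx1 hy1 ha hb hab
    have hc2 : a * c + b * c = c := by rw [← add_mul, hab, one_mul]
    have m1 := mul_le_mul_of_nonneg_left hx2 ha
    have m2 := mul_le_mul_of_nonneg_left hy2 hb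
    simp only [hg, mem_setOf_eq] at m1 m2 ⊢
    rw [htr]
    nlinarith [m1, m2, hld, hc2]
  -- Compactness
  · -- closedness
    have hKdesc : {S : Mat p | S.PosDef ∧ g S ≤ c} =
        {S : Mat p | S.PosSemidef} ∩
          ({S : Mat p | Real.exp (-c) ≤ S.det} ∩ g ⁻¹' (Iic c)) := by
      ext S
      simp only [mem_setOf_eq, mem_inter_iff, mem_preimage, mem_Iic]
      constructor
      · rintro ⟨hS, hgS⟩
        refine ⟨hS.posSemidef, ?_, hgS⟩
        have htr0 : 0 ≤ (Sh⁻¹ * S).trace := trace_inv_mul_nonneg hSh hS.posSemidef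
        have hlb : -c ≤ Real.log S.det := by
          simp only [hg] at hgS; linarith
        calc Real.exp (-c) ≤ Real.exp (Real.log S.det) := Real.exp_le_exp.2 hlb
          _ = S.det := Real.exp_log hS.det_pos
      · rintro ⟨hpsd, hdet, hgS⟩
        have hdpos : 0 < S.det := lt_of_lt_of_le (Real.exp_pos _) hdet
        exact ⟨posDef_of_posSemidef_det_ne_zero hpsd hdpos.ne', hgS⟩
    have hD : IsClosed {S : Mat p | Real.exp (-c) ≤ S.det} :=
      isClosed_le continuous_const continuous_id.matrix_det
    have hcont : ContinuousOn g {S : Mat p | Real.exp (-c) ≤ S.det} := by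
      apply ContinuousOn.sub
      · exact ((continuous_const.matrix_mul continuous_id).matrix_trace).continuousOn
      · intro S hS
        have hdpos : 0 < S.det := lt_of_lt_of_le (Real.exp_pos _) hS
        have : ContinuousAt (fun S : Mat p => Real.log S.det) S :=
          (Real.continuousAt_log hdpos.ne').comp (continuous_id.matrix_det).continuousAt
        exact this.continuousWithinAt
    have hclosed : IsClosed {S : Mat p | S.PosDef ∧ g S ≤ c} := by
      rw [hKdesc]
      exact isClosed_psd.inter (hcont.preimage_isClosed_of_isClosed hD isClosed_Iic)
    -- boundedness
    set b : ℝ := 2 * (2 * ε + 1) with hbdef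
    have hb0 : 0 ≤ b := by positivity
    set C : ℝ := b * Sh.trace with hCdef
    have hShdiag : ∀ i, 0 ≤ Sh i i := fun i => psd_diag_nonneg hSh.posSemidef i
    have hShtr : ∀ i, Sh i i ≤ Sh.trace := fun i => by
      have := Finset.single_le_sum (f := fun i => Sh i i) (fun i _ => hShdiag i)
        (Finset.mem_univ i)
      simpa [Matrix.trace] using this
    have hsub : {S : Mat p | S.PosDef ∧ g S ≤ c} ⊆
        Set.univ.pi (fun _ : Fin p => Set.univ.pi fun _ : Fin p => Icc (-C) C) := by
      rintro S ⟨hS, hgS⟩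
      set R := hSh.posSemidef.sqrt with hRdef
      have hR : R.PosDef := sqrt_posDef hSh
      have hRR : R * R = Sh := hSh.posSemidef.sqrt_mul_self
      have hRunit : IsUnit R.det := isUnit_iff_ne_zero.2 hR.det_pos.ne'
      have hRH : R.IsHermitian := hSh.posSemidef.posSemidef_sqrt.1
      have hRiH : (R⁻¹).IsHermitian := hR.inv.1
      set M := R⁻¹ * S * R⁻¹ with hMdef
      have hM : M.PosDef := by
        apply posDef_of_posSemidef_det_ne_zero
        · have := hS.posSemidef.mul_mul_conjTranspose_same (R⁻¹)
          rwa [hRiH.eq] at this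
        · rw [hMdef, det_mul, det_mul, det_nonsing_inv, Ring.inverse_eq_inv]
          exact ne_of_gt (mul_pos (mul_pos (inv_pos.2 hR.det_pos) hS.det_pos)
            (inv_pos.2 hR.det_pos))
      have hinv : Sh⁻¹ = R⁻¹ * R⁻¹ := by rw [← hRR, Matrix.mul_inv_rev]
      have htrM : M.trace = (Sh⁻¹ * S).trace := by
        rw [hinv, Matrix.mul_assoc, trace_mul_comm]
      have hdetM : M.det = S.det / Sh.det := by
        rw [hMdef, det_mul, det_mul, det_nonsing_inv, Ring.inverse_eq_inv, ← hRR, det_mul]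
        field_simp
      have hlogM : Real.log M.det = Real.log S.det - Real.log Sh.det := by
        rw [hdetM, Real.log_div hS.det_pos.ne' hSh.det_pos.ne']
      have hMc : M.trace - Real.log M.det ≤ 2 * ε + p := by
        simp only [hg] at hgS
        rw [htrM, hlogM]
        simp only [hc] at hgS
        linarith
      have heig : ∀ j, hM.1.eigenvalues j ≤ b := fun j => by
        have := eig_upper hM hMc j
        simp only [hbdef]
        linarith
      have hLoew : (b • (1 : Mat p) - M).PosSemidef := loewner_le hM.1 heig
      have hPSD2 : (b • Sh - S).PosSemidef := by
        have h1 := hLoew.mul_mul_conjTranspose_same R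
        rw [hRH.eq] at h1
        have h2 : R * (b • (1 : Mat p) - M) * R = b • Sh - S := by
          rw [hMdef, Matrix.mul_sub, Matrix.sub_mul, Matrix.mul_smul, Matrix.smul_mul,
            Matrix.mul_one, hRR]
          congr 1
          rw [← Matrix.mul_assoc, ← Matrix.mul_assoc, Matrix.mul_nonsing_inv _ hRunit,
            Matrix.one_mul, Matrix.mul_assoc, Matrix.nonsing_inv_mul _ hRunit, Matrix.mul_one]
        rwa [h2] at h1
      have hdiagS : ∀ i, S i i ≤ b * Sh i i := fun i => by
        have := psd_diag_nonneg hPSD2 i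
        simp only [Matrix.sub_apply, Matrix.smul_apply, smul_eq_mul] at this
        linarith
      have hSdiag0 : ∀ i, 0 ≤ S i i := fun i => psd_diag_nonneg hS.posSemidef i
      intro i _
      intro j _
      have hentry := psd_entry_le hS.posSemidef i j
      have hCbound : |S i j| ≤ C := by
        have h1 : S i i ≤ b * Sh.trace := le_trans (hdiagS i)
          (mul_le_mul_of_nonneg_left (hShtr i) hb0)
        have h2 : S j j ≤ b * Sh.trace := le_trans (hdiagS j)
          (mul_le_mul_of_nonneg_left (hShtr j) hb0)
        simp only [hCdef]
        calc |S i j| ≤ (S i i + S j j) / 2 := hentry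
          _ ≤ b * Sh.trace := by linarith
      exact ⟨neg_le_of_abs_le hCbound, le_of_abs_le hCbound⟩
    exact IsCompact.of_isClosed_subset
      (isCompact_univ_pi fun i => isCompact_univ_pi fun j => isCompact_Icc) hclosed hsub
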